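/- Let λ(y₁,y₂) = y₁^{-2} y₂^{-1} (2πΓ₁₂)^{-1/2} exp(-(log(y₂/y₁) + Γ₁₂/2)² / (2Γ₁₂)) for Γ₁₂ > 0 (bivariate Hüsler–Reiss exponent measure density). Then ∫_{y₁>1} ∫_{y₂>0} λ(y₁,y₂) dy₂ dy₁ = 1 and ∫∫_{max(y₁,y₂)>1} λ(y₁,y₂) dy₁ dy₂ = 2Φ(√Γ₁₂ / 2), where Φ is the standard normal CDF. -/

import Mathlib

open Set MeasureTheory Real

noncomputable def lamE (G y x : ℝ) : ℝ :=
  (y ^ 2)⁻¹ * x⁻¹ * (Real.sqrt (2 * π * G))⁻¹ *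
    Real.exp (-(Real.log (x / y) + G / 2) ^ 2 / (2 * G))

noncomputable def stdN (s : ℝ) : ℝ := (Real.sqrt (2 * π))⁻¹ * Real.exp (-s ^ 2 / 2)

lemma stdN_integrable : Integrable stdN := by
  have h : (fun x : ℝ => Real.exp (-(2⁻¹) * x ^ 2)) = fun x => Real.exp (-x ^ 2 / 2) := by
    funext x; congr 1; ring
  have := (integrable_exp_neg_mul_sq (by norm_num : (0:ℝ) < 2⁻¹))
  rw [h] at this
  exact this.const_mul _

lemma stdN_integral : ∫ s, stdN s = 1 := by
  unfold stdN
  rw [integral_const_mul]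
  have h : (fun x : ℝ => Real.exp (-(2⁻¹) * x ^ 2)) = fun x => Real.exp (-x ^ 2 / 2) := by
    funext x; congr 1; ring
  have hg := integral_gaussian (2⁻¹ : ℝ)
  rw [h] at hg
  rw [hg]
  rw [show (π / 2⁻¹) = 2 * π by ring]
  rw [inv_mul_cancel₀ (by positivity : Real.sqrt (2 * π) ≠ 0)]

section CoV

variable (G y : ℝ)

noncomputable def phiHR (s : ℝ) : ℝ := y * Real.exp (Real.sqrt G * s - G / 2)

variable {G y} (hG : 0 < G) (hy : 0 < y)
include hG hy

lemma phiHR_pt (s : ℝ) :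
    |y * (Real.exp (Real.sqrt G * s - G / 2) * (Real.sqrt G * 1))| • lamE G y (phiHR G y s)
      = (y ^ 2)⁻¹ * stdN s := by
  have hc : (0:ℝ) < Real.sqrt G := Real.sqrt_pos.2 hG
  have h4 : Real.sqrt (2 * π * G) = Real.sqrt (2 * π) * Real.sqrt G :=
    Real.sqrt_mul (by positivity) G
  rw [smul_eq_mul, lamE, phiHR, mul_div_cancel_left₀ _ hy.ne', Real.log_exp,
    show Real.sqrt G * s - G / 2 + G / 2 = Real.sqrt G * s by ring,
    show -(Real.sqrt G * s) ^ 2 / (2 * G) = -s ^ 2 / 2 by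
      rw [mul_pow, Real.sq_sqrt hG.le]; field_simp,
    h4, stdN]
  have hE : (0:ℝ) < Real.exp (Real.sqrt G * s - G / 2) := Real.exp_pos _
  set E := Real.exp (Real.sqrt G * s - G / 2) with hEdef
  have hsq : Real.sqrt (2 * π) ≠ 0 := by positivity
  rw [abs_of_pos (by positivity)]
  field_simp

lemma phiHR_inj : ∀ S : Set ℝ, InjOn (phiHR G y) S := by
  intro S
  have : StrictMono (phiHR G y) := by
    intro a b hab
    have hc : (0:ℝ) < Real.sqrt G := Real.sqrt_pos.2 hG
    exact mul_lt_mul_of_pos_left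
      (Real.exp_lt_exp.2 (by nlinarith)) hy
  exact this.injective.injOn

omit hG hy in
lemma phiHR_deriv (S : Set ℝ) (s : ℝ) :
    HasDerivWithinAt (phiHR G y)
      (y * (Real.exp (Real.sqrt G * s - G / 2) * (Real.sqrt G * 1))) S s := by
  have h : HasDerivAt (fun x : ℝ => Real.sqrt G * x - G / 2) (Real.sqrt G * 1) s :=
    ((hasDerivAt_id s).const_mul (Real.sqrt G)).sub_const _
  exact (((h.exp).const_mul y).hasDerivWithinAt)

lemma phiHR_cov (S : Set ℝ) (hS : MeasurableSet S) :
    ∫ x in (phiHR G y) '' S, lamE G y x = ∫ s in S, (y ^ 2)⁻¹ * stdN s := by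
  rw [integral_image_eq_integral_abs_deriv_smul hS (fun s _ => phiHR_deriv S s)
    (phiHR_inj hG hy S)]
  exact setIntegral_congr_fun hS fun s _ => phiHR_pt hG hy s

lemma phiHR_integrableOn (S : Set ℝ) (hS : MeasurableSet S) :
    IntegrableOn (lamE G y) ((phiHR G y) '' S) := by
  rw [integrableOn_image_iff_integrableOn_abs_deriv_smul hS
    (fun s _ => phiHR_deriv S s) (phiHR_inj hG hy S)]
  refine (((stdN_integrable.const_mul ((y ^ 2)⁻¹)).integrableOn).congr_fun
    (fun s _ => (phiHR_pt hG hy s).symm) hS)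

lemma phiHR_img_univ : (phiHR G y) '' univ = Ioi 0 := by
  ext x
  simp only [image_univ, mem_range, mem_Ioi]
  constructor
  · rintro ⟨s, rfl⟩; exact mul_pos hy (Real.exp_pos _)
  · intro hx
    refine ⟨(Real.log (x / y) + G / 2) / Real.sqrt G, ?_⟩
    have hc : (0:ℝ) < Real.sqrt G := Real.sqrt_pos.2 hG
    rw [phiHR, mul_div_cancel₀ _ hc.ne', add_sub_cancel_right,
      Real.exp_log (div_pos hx hy), mul_div_cancel₀ _ hy.ne']

lemma phiHR_img_Iic : (phiHR G y) '' Iic (Real.sqrt G / 2) = Ioc 0 y := by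
  have hc : (0:ℝ) < Real.sqrt G := Real.sqrt_pos.2 hG
  have hend : phiHR G y (Real.sqrt G / 2) = y := by
    rw [phiHR, show Real.sqrt G * (Real.sqrt G / 2) = Real.sqrt G * Real.sqrt G / 2 by ring,
      Real.mul_self_sqrt hG.le, sub_self, Real.exp_zero, mul_one]
  ext x
  simp only [mem_image, mem_Iic, mem_Ioc]
  constructor
  · rintro ⟨s, hs, rfl⟩
    refine ⟨mul_pos hy (Real.exp_pos _), ?_⟩
    calc phiHR G y s ≤ phiHR G y (Real.sqrt G / 2) := by
          unfold phiHR
          exact mul_le_mul_of_nonneg_left (Real.exp_le_exp.2 (by nlinarith)) hy.le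
      _ = y := hend
  · rintro ⟨hx0, hxy⟩
    refine ⟨(Real.log (x / y) + G / 2) / Real.sqrt G, ?_, ?_⟩
    · rw [div_le_div_iff₀ hc two_pos]
      have hlog : Real.log (x / y) ≤ 0 :=
        Real.log_nonpos (by positivity) ((div_le_one hy).2 hxy)
      nlinarith [Real.mul_self_sqrt hG.le]
    · rw [phiHR, mul_div_cancel₀ _ hc.ne', add_sub_cancel_right,
        Real.exp_log (div_pos hx0 hy), mul_div_cancel₀ _ hy.ne']

lemma lamE_inner_full : ∫ x in Ioi (0:ℝ), lamE G y x = (y ^ 2)⁻¹ := by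
  rw [← phiHR_img_univ hG hy, phiHR_cov hG hy univ MeasurableSet.univ,
    Measure.restrict_univ, integral_const_mul, stdN_integral, mul_one]

lemma lamE_inner_Ioc :
    ∫ x in Ioc (0:ℝ) y, lamE G y x = (y ^ 2)⁻¹ * ∫ t in Iic (Real.sqrt G / 2), stdN t := by
  rw [← phiHR_img_Iic hG hy, phiHR_cov hG hy _ measurableSet_Iic, integral_const_mul]

lemma lamE_integrableOn_Ioc : IntegrableOn (lamE G y) (Ioc (0:ℝ) y) := by
  rw [← phiHR_img_Iic hG hy]
  exact phiHR_integrableOn hG hy _ measurableSet_Iic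

end CoV

lemma rpow_aux {y : ℝ} (hy : 0 < y) : (y:ℝ) ^ (-2:ℝ) = (y ^ 2)⁻¹ := by
  rw [show (-2:ℝ) = -((2:ℕ):ℝ) by norm_num, Real.rpow_neg hy.le, Real.rpow_natCast]

lemma integral_inv_sq_Ioi : ∫ y in Ioi (1:ℝ), (y ^ 2)⁻¹ = 1 := by
  rw [← setIntegral_congr_fun measurableSet_Ioi
    (fun y (hy : y ∈ Ioi (1:ℝ)) => rpow_aux (lt_trans one_pos hy)),
    integral_Ioi_rpow_of_lt (by norm_num) one_pos]
  norm_num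

lemma integrableOn_inv_sq : IntegrableOn (fun y : ℝ => (y ^ 2)⁻¹) (Ioi (1:ℝ)) :=
  (integrableOn_Ioi_rpow_of_lt (by norm_num : (-2:ℝ) < -1) one_pos).congr_fun
    (fun y hy => rpow_aux (lt_trans one_pos hy)) measurableSet_Ioi

lemma lamE_nonneg (G y : ℝ) {x : ℝ} (hx : 0 ≤ x) : 0 ≤ lamE G y x := by
  unfold lamE; positivity

lemma lamE_symm {G : ℝ} (hG : 0 < G) {y x : ℝ} (hy : 0 < y) (hx : 0 < x) :
    lamE G y x = lamE G x y := by
  unfold lamE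
  rw [Real.log_div hx.ne' hy.ne', Real.log_div hy.ne' hx.ne']
  have hL : Real.exp (Real.log x - Real.log y) = x / y := by
    rw [Real.exp_sub, Real.exp_log hx, Real.exp_log hy]
  have key : -(Real.log y - Real.log x + G / 2) ^ 2 / (2 * G)
      = -(Real.log x - Real.log y + G / 2) ^ 2 / (2 * G) + (Real.log x - Real.log y) := by
    field_simp; ring
  rw [key, Real.exp_add, hL]
  field_simp

lemma lamE_meas (G : ℝ) : Measurable (fun p : ℝ × ℝ => lamE G p.1 p.2) := by
  unfold lamE
  measurability

def Aset : Set (ℝ × ℝ) := {p | 1 < p.1 ∧ 0 < p.2 ∧ p.2 ≤ p.1}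
def Bset : Set (ℝ × ℝ) := {p | 0 < p.1 ∧ 1 < p.2 ∧ p.1 < p.2}
def Cset : Set (ℝ × ℝ) := {p | 1 < p.1 ∧ 0 < p.2 ∧ p.2 < p.1}

lemma mem_Aset {p : ℝ × ℝ} : p ∈ Aset ↔ 1 < p.1 ∧ 0 < p.2 ∧ p.2 ≤ p.1 := Iff.rfl
lemma mem_Bset {p : ℝ × ℝ} : p ∈ Bset ↔ 0 < p.1 ∧ 1 < p.2 ∧ p.1 < p.2 := Iff.rfl
lemma mem_Cset {p : ℝ × ℝ} : p ∈ Cset ↔ 1 < p.1 ∧ 0 < p.2 ∧ p.2 < p.1 := Iff.rfl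

lemma Aset_meas : MeasurableSet Aset :=
  (measurableSet_lt measurable_const measurable_fst).inter
    ((measurableSet_lt measurable_const measurable_snd).inter
      (measurableSet_le measurable_snd measurable_fst))
lemma Bset_meas : MeasurableSet Bset :=
  (measurableSet_lt measurable_const measurable_fst).inter
    ((measurableSet_lt measurable_const measurable_snd).inter
      (measurableSet_lt measurable_fst measurable_snd))
lemma Cset_meas : MeasurableSet Cset :=
  (measurableSet_lt measurable_const measurable_fst).inter
    ((measurableSet_lt measurable_const measurable_snd).inter
      (measurableSet_lt measurable_snd measurable_fst))

theorem part2 (G : ℝ) (hG : 0 < G) :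
    ∫ p in {p : ℝ × ℝ | 0 < p.1 ∧ 0 < p.2 ∧ 1 < max p.1 p.2}, lamE G p.1 p.2
      = 2 * ∫ t in Iic (Real.sqrt G / 2), stdN t := by
  set Φ₀ : ℝ := ∫ t in Iic (Real.sqrt G / 2), stdN t with hΦ₀
  have hmeas : Measurable (fun p : ℝ × ℝ => lamE G p.1 p.2) := lamE_meas G
  -- sections of Aset
  have hsec : ∀ x y : ℝ, Aset.indicator (fun p : ℝ × ℝ => lamE G p.1 p.2) (x, y)
      = if 1 < x then (Ioc (0:ℝ) x).indicator (lamE G x) y else 0 := by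
    intro x y
    by_cases hx : 1 < x
    · rw [if_pos hx]
      by_cases hy : y ∈ Ioc (0:ℝ) x
      · rw [indicator_of_mem hy, indicator_of_mem (show (x, y) ∈ Aset from ⟨hx, hy.1, hy.2⟩)]
      · rw [indicator_of_notMem hy,
          indicator_of_notMem (fun hmem => hy ⟨hmem.2.1, hmem.2.2⟩)]
    · rw [if_neg hx, indicator_of_notMem (fun hmem => hx hmem.1)]
  have hint_sec : ∀ x : ℝ,
      Integrable (fun y => Aset.indicator (fun p : ℝ × ℝ => lamE G p.1 p.2) (x, y)) := by
    intro x
    by_cases hx : 1 < x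
    · rw [show (fun y => Aset.indicator (fun p : ℝ × ℝ => lamE G p.1 p.2) (x, y))
          = (Ioc (0:ℝ) x).indicator (lamE G x) from
        funext fun y => by rw [hsec x y, if_pos hx]]
      rw [integrable_indicator_iff measurableSet_Ioc]
      exact lamE_integrableOn_Ioc hG (lt_trans one_pos hx)
    · rw [show (fun y => Aset.indicator (fun p : ℝ × ℝ => lamE G p.1 p.2) (x, y))
          = fun _ => (0:ℝ) from funext fun y => by rw [hsec x y, if_neg hx]]
      exact integrable_zero _ _ _
  have hval : ∀ x : ℝ, (∫ y, Aset.indicator (fun p : ℝ × ℝ => lamE G p.1 p.2) (x, y))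
      = (Ioi (1:ℝ)).indicator (fun x => (x ^ 2)⁻¹ * Φ₀) x := by
    intro x
    by_cases hx : 1 < x
    · simp only [hsec, if_pos hx]
      rw [integral_indicator measurableSet_Ioc,
        lamE_inner_Ioc hG (lt_trans one_pos hx), ← hΦ₀,
        indicator_of_mem (show x ∈ Ioi (1:ℝ) from hx)]
    · simp only [hsec, if_neg hx]
      rw [integral_zero, indicator_of_notMem (show x ∉ Ioi (1:ℝ) from hx)]
  have hnonneg : ∀ x y : ℝ, ‖Aset.indicator (fun p : ℝ × ℝ => lamE G p.1 p.2) (x, y)‖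
      = Aset.indicator (fun p : ℝ × ℝ => lamE G p.1 p.2) (x, y) := by
    intro x y
    rw [Real.norm_eq_abs, abs_of_nonneg]
    exact indicator_nonneg (fun p hp => lamE_nonneg G p.1 hp.2.1.le) _
  have hInt : Integrable (Aset.indicator (fun p : ℝ × ℝ => lamE G p.1 p.2))
      (volume.prod volume) := by
    rw [integrable_prod_iff ((hmeas.indicator Aset_meas).aestronglyMeasurable)]
    refine ⟨Filter.Eventually.of_forall hint_sec, ?_⟩
    have h : (fun x => ∫ y, ‖Aset.indicator (fun p : ℝ × ℝ => lamE G p.1 p.2) (x, y)‖)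
        = (Ioi (1:ℝ)).indicator (fun x => (x ^ 2)⁻¹ * Φ₀) := by
      funext x
      simp only [hnonneg]
      exact hval x
    rw [h]
    rw [integrable_indicator_iff measurableSet_Ioi]
    exact integrableOn_inv_sq.mul_const _
  have hIA : ∫ p in Aset, lamE G p.1 p.2 = Φ₀ := by
    rw [← integral_indicator Aset_meas, Measure.volume_eq_prod ℝ ℝ, integral_prod _ hInt,
      show (fun x => ∫ y, Aset.indicator (fun p : ℝ × ℝ => lamE G p.1 p.2) (x, y))
        = (Ioi (1:ℝ)).indicator (fun x => (x ^ 2)⁻¹ * Φ₀) from funext hval,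
      integral_indicator measurableSet_Ioi, integral_mul_const, integral_inv_sq_Ioi, one_mul]
  have hIntA : IntegrableOn (fun p : ℝ × ℝ => lamE G p.1 p.2) Aset := by
    rw [← integrable_indicator_iff Aset_meas, Measure.volume_eq_prod ℝ ℝ]
    exact hInt
  -- B side via swap
  have hBpre : Prod.swap ⁻¹' Cset = Bset := by
    ext p
    constructor
    · rintro ⟨h1, h2, h3⟩; exact ⟨h2, h1, h3⟩
    · rintro ⟨h1, h2, h3⟩; exact ⟨h2, h1, h3⟩
  have hCA : Cset ⊆ Aset := fun p hp => ⟨hp.1, hp.2.1, hp.2.2.le⟩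
  have hD0 : volume {p : ℝ × ℝ | p.1 = p.2} = 0 := by
    have hD : MeasurableSet {p : ℝ × ℝ | p.1 = p.2} :=
      (isClosed_eq continuous_fst continuous_snd).measurableSet
    rw [Measure.volume_eq_prod ℝ ℝ, Measure.measure_prod_null hD]
    refine Filter.Eventually.of_forall fun x => ?_
    have h : Prod.mk x ⁻¹' {p : ℝ × ℝ | p.1 = p.2} = {x} := by
      ext y; simp [eq_comm]
    simp [h]
  have haeCA : Cset =ᵐ[volume] Aset := by
    rw [ae_eq_set]
    constructor
    · rw [Set.diff_eq_empty.2 hCA]; exact measure_empty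
    · refine measure_mono_null (fun p hp => ?_) hD0
      rcases hp with ⟨⟨h1, h2, h3⟩, hn⟩
      rcases eq_or_lt_of_le h3 with h | h
      · exact h.symm
      · exact absurd ⟨h1, h2, h⟩ hn
  have hIB : ∫ p in Bset, lamE G p.1 p.2 = Φ₀ := by
    calc ∫ p in Bset, lamE G p.1 p.2
        = ∫ p in Bset, ((fun p : ℝ × ℝ => lamE G p.1 p.2) ∘ Prod.swap) p :=
          setIntegral_congr_fun Bset_meas fun p hp =>
            lamE_symm hG hp.1 (lt_trans one_pos hp.2.1)
      _ = ∫ q in Cset, lamE G q.1 q.2 := by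
          rw [Measure.volume_eq_prod ℝ ℝ, ← hBpre]
          exact Measure.measurePreserving_swap.setIntegral_preimage_emb
            MeasurableEquiv.prodComm.measurableEmbedding
            (fun p : ℝ × ℝ => lamE G p.1 p.2) Cset
      _ = ∫ q in Aset, lamE G q.1 q.2 := setIntegral_congr_set haeCA
      _ = Φ₀ := hIA
  have hIntB : IntegrableOn (fun p : ℝ × ℝ => lamE G p.1 p.2) Bset := by
    have h1 : IntegrableOn (fun p : ℝ × ℝ => lamE G p.1 p.2) Cset := hIntA.mono_set hCA
    have h2 : Integrable (Cset.indicator (fun p : ℝ × ℝ => lamE G p.1 p.2))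
        (volume.prod volume) := by
      rw [← Measure.volume_eq_prod ℝ ℝ, integrable_indicator_iff Cset_meas]; exact h1
    have h3 : Integrable ((Cset.indicator (fun p : ℝ × ℝ => lamE G p.1 p.2)) ∘ Prod.swap)
        (volume.prod volume) :=
      (Measure.measurePreserving_swap.integrable_comp_emb
        MeasurableEquiv.prodComm.measurableEmbedding).2 h2
    have h4 : (Cset.indicator (fun p : ℝ × ℝ => lamE G p.1 p.2)) ∘ Prod.swap
        = Bset.indicator ((fun p : ℝ × ℝ => lamE G p.1 p.2) ∘ Prod.swap) := by
      funext p
      by_cases hp : p ∈ Bset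
      · have hp' : Prod.swap p ∈ Cset := by rw [← hBpre] at hp; exact hp
        rw [Function.comp_apply, indicator_of_mem hp', indicator_of_mem hp]
        rfl
      · have hp' : Prod.swap p ∉ Cset := by rw [← hBpre] at hp; exact hp
        rw [Function.comp_apply, indicator_of_notMem hp', indicator_of_notMem hp]
    rw [h4] at h3
    have h5 : IntegrableOn ((fun p : ℝ × ℝ => lamE G p.1 p.2) ∘ Prod.swap) Bset := by
      rw [← integrable_indicator_iff Bset_meas, Measure.volume_eq_prod ℝ ℝ]; exact h3
    exact h5.congr_fun
      (fun p hp => (lamE_symm hG hp.1 (lt_trans one_pos hp.2.1)).symm) Bset_meas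
  have hsplit : {p : ℝ × ℝ | 0 < p.1 ∧ 0 < p.2 ∧ 1 < max p.1 p.2} = Aset ∪ Bset := by
    ext p
    simp only [mem_setOf_eq, mem_union, mem_Aset, mem_Bset]
    constructor
    · rintro ⟨h1, h2, h3⟩
      rcases le_or_gt p.2 p.1 with h | h
      · left; exact ⟨by rwa [max_eq_left h] at h3, h2, h⟩
      · right; exact ⟨h1, by rwa [max_eq_right h.le] at h3, h⟩
    · rintro (⟨h1, h2, h3⟩ | ⟨h1, h2, h3⟩)
      · exact ⟨lt_trans one_pos h1, h2, lt_of_lt_of_le h1 (le_max_left _ _)⟩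
      · exact ⟨h1, lt_trans one_pos h2, lt_of_lt_of_le h2 (le_max_right _ _)⟩
  have hdisj : Disjoint Aset Bset := by
    rw [Set.disjoint_left]
    rintro p ⟨_, _, h3⟩ ⟨_, _, h3'⟩
    exact absurd h3' (not_lt.2 h3)
  rw [hsplit, setIntegral_union hdisj Bset_meas hIntA hIntB, hIA, hIB]
  ring


/-- The bivariate Hüsler–Reiss exponent measure density has unit
marginal mass on `{y₁ > 1}`, and its mass on `{max(y₁,y₂) > 1}` (the bivariate
extremal coefficient `Λ(1,1)`) equals `2Φ(√Γ₁₂/2)`. -/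
theorem husler_reiss_normalization_and_extremal_coefficient
    (G : ℝ) (hG : 0 < G)
    (lam : ℝ → ℝ → ℝ)
    (hlam : ∀ y₁ y₂ : ℝ, 0 < y₁ → 0 < y₂ → lam y₁ y₂ =
      (y₁ ^ 2)⁻¹ * y₂⁻¹ * (Real.sqrt (2 * π * G))⁻¹ *
        Real.exp (-(Real.log (y₂ / y₁) + G / 2) ^ 2 / (2 * G)))
    (Φ : ℝ → ℝ)
    (hΦ : ∀ x, Φ x = ∫ t in Iic x, (Real.sqrt (2 * π))⁻¹ * Real.exp (-t ^ 2 / 2)) :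
    (∫ y₁ in Ioi (1:ℝ), ∫ y₂ in Ioi (0:ℝ), lam y₁ y₂ = 1) ∧
    (∫ p in {p : ℝ × ℝ | 0 < p.1 ∧ 0 < p.2 ∧ 1 < max p.1 p.2}, lam p.1 p.2 =
      2 * Φ (Real.sqrt G / 2)) := by
  constructor
  · have h1 : ∫ y₁ in Ioi (1:ℝ), ∫ y₂ in Ioi (0:ℝ), lam y₁ y₂
        = ∫ y₁ in Ioi (1:ℝ), (y₁ ^ 2)⁻¹ := by
      refine setIntegral_congr_fun measurableSet_Ioi fun y₁ hy₁ => ?_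
      have hy₁' : (0:ℝ) < y₁ := lt_trans one_pos hy₁
      have h2 : ∫ y₂ in Ioi (0:ℝ), lam y₁ y₂ = ∫ y₂ in Ioi (0:ℝ), lamE G y₁ y₂ :=
        setIntegral_congr_fun measurableSet_Ioi fun y₂ hy₂ => by
          rw [hlam _ _ hy₁' hy₂]; rfl
      rw [h2, lamE_inner_full hG hy₁']
    rw [h1, integral_inv_sq_Ioi]
  · have hS : MeasurableSet {p : ℝ × ℝ | 0 < p.1 ∧ 0 < p.2 ∧ 1 < max p.1 p.2} :=
      (measurableSet_lt measurable_const measurable_fst).inter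
        ((measurableSet_lt measurable_const measurable_snd).inter
          (measurableSet_lt measurable_const (measurable_fst.max measurable_snd)))
    have h1 : ∫ p in {p : ℝ × ℝ | 0 < p.1 ∧ 0 < p.2 ∧ 1 < max p.1 p.2}, lam p.1 p.2
        = ∫ p in {p : ℝ × ℝ | 0 < p.1 ∧ 0 < p.2 ∧ 1 < max p.1 p.2}, lamE G p.1 p.2 :=
      setIntegral_congr_fun hS fun p hp => by rw [hlam _ _ hp.1 hp.2.1]; rfl
    rw [h1, part2 G hG, hΦ]
    unfold stdN
    rfl
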